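/- For h,k = 1,…,d let A^{hk} and M^{hk} be m×m real matrices such that |Im Σ_{h,k=1}^d (A^{hk}θ^k, θ^h)| ≤ C₀ Re Σ_{h,k=1}^d (M^{hk}θ^k, θ^h) and 0 ≤ Re Σ_{h,k=1}^d (A^{hk}θ^k, θ^h) ≤ C₁ Re Σ_{h,k=1}^d (M^{hk}θ^k, θ^h) for some constants C₀, C₁ > 0 and every θ¹,…,θ^d ∈ ℂ^m. Then |Σ_{h,k=1}^d (A^{hk}θ^k, η^h)| ≤ (C₀ + C₁) (Re Σ_{h,k=1}^d (M^{hk}θ^k, θ^h))^{1/2} (Re Σ_{h,k=1}^d (M^{hk}η^k, η^h))^{1/2} for every θ¹,…,θ^d, η¹,…,η^d ∈ ℂ^m. -/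

import Mathlib

open ComplexConjugate

noncomputable section

/-- The sesquilinear form `Σ_{h,k} (A^{hk} θ^k, η^h)` associated with a family of
`m × m` real matrices `A^{hk}` (`h,k = 1,…,d`), where `(·,·)` is the Hermitian inner
product `(u,v) = Σ_i u_i conj(v_i)` on `ℂ^m`. -/
def cform {d m : ℕ} (A : Fin d → Fin d → Fin m → Fin m → ℝ)
    (θ η : Fin d → Fin m → ℂ) : ℂ :=
  ∑ h, ∑ k, ∑ i, ∑ j, (A h k i j : ℂ) * θ k j * conj (η h i)

/-- Cauchy–Schwarz for a positive semidefinite Hermitian sesquilinear form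
(linear in the first slot, conjugate-linear in the second). -/
lemma cs_of_form {V : Type*} [AddCommGroup V] [Module ℂ V] (F : V → V → ℂ)
    (hadd : ∀ x y z, F (x + y) z = F x z + F y z)
    (hsmul : ∀ (c : ℂ) (x y : V), F (c • x) y = c * F x y)
    (hconj : ∀ x y, conj (F x y) = F y x)
    (hpos : ∀ x, 0 ≤ (F x x).re) (x y : V) :
    ‖F x y‖ * ‖F x y‖ ≤ (F x x).re * (F y y).re := by
  letI cc : PreInnerProductSpace.Core ℂ V :=
  { inner := fun a b => F b a
    conj_inner_symm := fun a b => hconj a b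
    re_inner_nonneg := fun a => hpos a
    add_left := fun a b z => by
      show F z (a + b) = F z a + F z b
      rw [← hconj (a + b) z, hadd, map_add, hconj, hconj]
    smul_left := fun a b r => by
      show F b (r • a) = conj r * F b a
      rw [← hconj (r • a) b, hsmul, map_mul, hconj] }
  have h : ‖F y x‖ * ‖F x y‖ ≤ (F x x).re * (F y y).re :=
    InnerProductSpace.Core.inner_mul_inner_self_le (𝕜 := ℂ) x y
  have hn : ‖F y x‖ = ‖F x y‖ := by rw [← hconj x y]; exact RCLike.norm_conj _
  rwa [hn] at h

lemma cform_add_left {d m : ℕ} (A : Fin d → Fin d → Fin m → Fin m → ℝ)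
    (θ θ' η : Fin d → Fin m → ℂ) :
    cform A (θ + θ') η = cform A θ η + cform A θ' η := by
  simp [cform, mul_add, add_mul, Finset.sum_add_distrib]

lemma cform_smul_left {d m : ℕ} (A : Fin d → Fin d → Fin m → Fin m → ℝ)
    (c : ℂ) (θ η : Fin d → Fin m → ℂ) :
    cform A (c • θ) η = c * cform A θ η := by
  simp only [cform, Finset.mul_sum]
  refine Finset.sum_congr rfl fun h _ => Finset.sum_congr rfl fun k _ =>
    Finset.sum_congr rfl fun i _ => Finset.sum_congr rfl fun j _ => ?_
  simp only [Pi.smul_apply, smul_eq_mul]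
  ring

lemma cform_add_right {d m : ℕ} (A : Fin d → Fin d → Fin m → Fin m → ℝ)
    (θ η η' : Fin d → Fin m → ℂ) :
    cform A θ (η + η') = cform A θ η + cform A θ η' := by
  simp [cform, mul_add, add_mul, Finset.sum_add_distrib]

lemma cform_smul_right {d m : ℕ} (A : Fin d → Fin d → Fin m → Fin m → ℝ)
    (c : ℂ) (θ η : Fin d → Fin m → ℂ) :
    cform A θ (c • η) = conj c * cform A θ η := by
  simp only [cform, Finset.mul_sum]
  refine Finset.sum_congr rfl fun h _ => Finset.sum_congr rfl fun k _ =>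
    Finset.sum_congr rfl fun i _ => Finset.sum_congr rfl fun j _ => ?_
  simp only [Pi.smul_apply, smul_eq_mul, map_mul]
  ring

/-- The Hermitian part of the form. -/
def hpart {d m : ℕ} (A : Fin d → Fin d → Fin m → Fin m → ℝ)
    (x y : Fin d → Fin m → ℂ) : ℂ :=
  (cform A x y + conj (cform A y x)) / 2

/-- The skew part of the form (already divided by `i`). -/
def spart {d m : ℕ} (A : Fin d → Fin d → Fin m → Fin m → ℝ)
    (x y : Fin d → Fin m → ℂ) : ℂ :=
  (cform A x y - conj (cform A y x)) / (2 * Complex.I)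

lemma hpart_add_left {d m : ℕ} (A : Fin d → Fin d → Fin m → Fin m → ℝ)
    (x y z : Fin d → Fin m → ℂ) :
    hpart A (x + y) z = hpart A x z + hpart A y z := by
  simp only [hpart, cform_add_left, cform_add_right, map_add]
  ring

lemma hpart_smul_left {d m : ℕ} (A : Fin d → Fin d → Fin m → Fin m → ℝ)
    (c : ℂ) (x y : Fin d → Fin m → ℂ) :
    hpart A (c • x) y = c * hpart A x y := by
  simp only [hpart, cform_smul_left, cform_smul_right, map_mul, Complex.conj_conj]
  ring

lemma hpart_conj {d m : ℕ} (A : Fin d → Fin d → Fin m → Fin m → ℝ)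
    (x y : Fin d → Fin m → ℂ) :
    conj (hpart A x y) = hpart A y x := by
  simp only [hpart, map_div₀, map_add, Complex.conj_conj, map_ofNat]
  ring

lemma hpart_diag {d m : ℕ} (A : Fin d → Fin d → Fin m → Fin m → ℝ)
    (x : Fin d → Fin m → ℂ) :
    hpart A x x = ((cform A x x).re : ℂ) := by
  simp only [hpart, Complex.add_conj]
  push_cast
  ring

lemma spart_add_left {d m : ℕ} (A : Fin d → Fin d → Fin m → Fin m → ℝ)
    (x y z : Fin d → Fin m → ℂ) :
    spart A (x + y) z = spart A x z + spart A y z := by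
  simp only [spart, cform_add_left, cform_add_right, map_add]
  ring

lemma spart_smul_left {d m : ℕ} (A : Fin d → Fin d → Fin m → Fin m → ℝ)
    (c : ℂ) (x y : Fin d → Fin m → ℂ) :
    spart A (c • x) y = c * spart A x y := by
  simp only [spart, cform_smul_left, cform_smul_right, map_mul, Complex.conj_conj]
  ring

lemma spart_conj {d m : ℕ} (A : Fin d → Fin d → Fin m → Fin m → ℝ)
    (x y : Fin d → Fin m → ℂ) :
    conj (spart A x y) = spart A y x := by
  simp only [spart, map_div₀, map_sub, map_mul, Complex.conj_conj, Complex.conj_I, map_ofNat]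
  ring

lemma spart_diag {d m : ℕ} (A : Fin d → Fin d → Fin m → Fin m → ℝ)
    (x : Fin d → Fin m → ℂ) :
    spart A x x = ((cform A x x).im : ℂ) := by
  have hI : (2 : ℂ) * Complex.I ≠ 0 := by
    simp [Complex.I_ne_zero]
  rw [spart, Complex.sub_conj]
  field_simp
  push_cast
  ring

lemma cform_decomp {d m : ℕ} (A : Fin d → Fin d → Fin m → Fin m → ℝ)
    (x y : Fin d → Fin m → ℂ) :
    cform A x y = hpart A x y + Complex.I * spart A x y := by
  rw [hpart, spart]
  have hI : Complex.I ≠ 0 := Complex.I_ne_zero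
  field_simp
  ring

lemma sq_le_to_sqrt {w x y : ℝ} (hx : 0 ≤ x) (hy : 0 ≤ y) (h : w * w ≤ x * y) :
    w ≤ Real.sqrt x * Real.sqrt y := by
  calc w ≤ |w| := le_abs_self w
    _ = Real.sqrt (w * w) := (Real.sqrt_mul_self_eq_abs w).symm
    _ ≤ Real.sqrt (x * y) := Real.sqrt_le_sqrt h
    _ = Real.sqrt x * Real.sqrt y := Real.sqrt_mul hx y

lemma sqrt_sum_le {a b c e : ℝ} (ha : 0 ≤ a) (hb : 0 ≤ b) (hc : 0 ≤ c) (he : 0 ≤ e) :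
    Real.sqrt a * Real.sqrt b + Real.sqrt c * Real.sqrt e ≤
      Real.sqrt (a + c) * Real.sqrt (b + e) := by
  have h1 : (Real.sqrt a * Real.sqrt b + Real.sqrt c * Real.sqrt e) ^ 2 ≤ (a + c) * (b + e) := by
    nlinarith [sq_nonneg (Real.sqrt a * Real.sqrt e - Real.sqrt c * Real.sqrt b),
      Real.sq_sqrt ha, Real.sq_sqrt hb, Real.sq_sqrt hc, Real.sq_sqrt he,
      Real.sqrt_nonneg a, Real.sqrt_nonneg b, Real.sqrt_nonneg c, Real.sqrt_nonneg e,
      mul_nonneg (Real.sqrt_nonneg a) (Real.sqrt_nonneg b),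
      mul_nonneg (Real.sqrt_nonneg c) (Real.sqrt_nonneg e)]
  have h2 : 0 ≤ Real.sqrt a * Real.sqrt b + Real.sqrt c * Real.sqrt e := by positivity
  calc Real.sqrt a * Real.sqrt b + Real.sqrt c * Real.sqrt e
      = Real.sqrt ((Real.sqrt a * Real.sqrt b + Real.sqrt c * Real.sqrt e) ^ 2) :=
        (Real.sqrt_sq h2).symm
    _ ≤ Real.sqrt ((a + c) * (b + e)) := Real.sqrt_le_sqrt h1
    _ = Real.sqrt (a + c) * Real.sqrt (b + e) := Real.sqrt_mul (by linarith) _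

theorem statement13 (d m : ℕ) (hd : 0 < d) (hm : 0 < m)
    (A M : Fin d → Fin d → Fin m → Fin m → ℝ) (C₀ C₁ : ℝ) (hC₀ : 0 < C₀) (hC₁ : 0 < C₁)
    (hIm : ∀ θ : Fin d → Fin m → ℂ, |(cform A θ θ).im| ≤ C₀ * (cform M θ θ).re)
    (hRe : ∀ θ : Fin d → Fin m → ℂ,
      0 ≤ (cform A θ θ).re ∧ (cform A θ θ).re ≤ C₁ * (cform M θ θ).re) :
    ∀ θ η : Fin d → Fin m → ℂ,
      ‖cform A θ η‖ ≤
        (C₀ + C₁) * Real.sqrt ((cform M θ θ).re) * Real.sqrt ((cform M η η).re) := by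
  intro θ η
  have hQ : ∀ x : Fin d → Fin m → ℂ, 0 ≤ (cform M x x).re := by
    intro x
    nlinarith [(hRe x).1, (hRe x).2]
  set Qθ := (cform M θ θ).re with hQθdef
  set Qη := (cform M η η).re with hQηdef
  have hQθ : 0 ≤ Qθ := hQ θ
  have hQη : 0 ≤ Qη := hQ η
  -- Bound on the Hermitian part
  have hScs : ‖hpart A θ η‖ * ‖hpart A θ η‖ ≤ (cform A θ θ).re * (cform A η η).re := by
    have := cs_of_form (hpart A) (hpart_add_left A) (hpart_smul_left A) (hpart_conj A)
      (fun x => by rw [hpart_diag]; simp [(hRe x).1]) θ η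
    simpa [hpart_diag] using this
  have hS : ‖hpart A θ η‖ ≤ C₁ * (Real.sqrt Qθ * Real.sqrt Qη) := by
    have h1 : ‖hpart A θ η‖ * ‖hpart A θ η‖ ≤ (C₁ * Qθ) * (C₁ * Qη) := by
      have h2 := (hRe θ).2
      have h3 := (hRe η).2
      have h4 := (hRe θ).1
      have h5 := (hRe η).1
      nlinarith [hScs]
    have := sq_le_to_sqrt (by positivity) (by positivity) h1
    calc ‖hpart A θ η‖ ≤ Real.sqrt (C₁ * Qθ) * Real.sqrt (C₁ * Qη) := this
      _ = C₁ * (Real.sqrt Qθ * Real.sqrt Qη) := by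
          rw [Real.sqrt_mul hC₁.le, Real.sqrt_mul hC₁.le]
          have h6 : Real.sqrt C₁ * Real.sqrt C₁ = C₁ := Real.mul_self_sqrt hC₁.le
          linear_combination (Real.sqrt Qθ * Real.sqrt Qη) * h6
  -- Bound on the skew part
  have habs : ∀ x : Fin d → Fin m → ℂ,
      -(C₀ * (cform M x x).re) ≤ (cform A x x).im ∧
        (cform A x x).im ≤ C₀ * (cform M x x).re := fun x => abs_le.mp (hIm x)
  set Fp : (Fin d → Fin m → ℂ) → (Fin d → Fin m → ℂ) → ℂ :=
    fun x y => (C₀ : ℂ) * hpart M x y + spart A x y with hFp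
  set Fm : (Fin d → Fin m → ℂ) → (Fin d → Fin m → ℂ) → ℂ :=
    fun x y => (C₀ : ℂ) * hpart M x y - spart A x y with hFm
  have hFpdiag : ∀ x, (Fp x x).re = C₀ * (cform M x x).re + (cform A x x).im := by
    intro x
    simp [hFp, hpart_diag, spart_diag]
  have hFmdiag : ∀ x, (Fm x x).re = C₀ * (cform M x x).re - (cform A x x).im := by
    intro x
    simp [hFm, hpart_diag, spart_diag]
  have hFpcs : ‖Fp θ η‖ * ‖Fp θ η‖ ≤
      (C₀ * Qθ + (cform A θ θ).im) * (C₀ * Qη + (cform A η η).im) := by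
    have := cs_of_form Fp
      (fun x y z => by simp only [hFp, hpart_add_left, spart_add_left]; ring)
      (fun c x y => by simp only [hFp, hpart_smul_left, spart_smul_left]; ring)
      (fun x y => by
        simp only [hFp, map_add, map_mul, hpart_conj, spart_conj, Complex.conj_ofReal])
      (fun x => by rw [hFpdiag x]; linarith [(habs x).1]) θ η
    simpa [hFpdiag θ, hFpdiag η] using this
  have hFmcs : ‖Fm θ η‖ * ‖Fm θ η‖ ≤
      (C₀ * Qθ - (cform A θ θ).im) * (C₀ * Qη - (cform A η η).im) := by
    have := cs_of_form Fm
      (fun x y z => by simp only [hFm, hpart_add_left, spart_add_left]; ring)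
      (fun c x y => by simp only [hFm, hpart_smul_left, spart_smul_left]; ring)
      (fun x y => by
        simp only [hFm, map_sub, map_mul, hpart_conj, spart_conj, Complex.conj_ofReal])
      (fun x => by rw [hFmdiag x]; linarith [(habs x).2]) θ η
    simpa [hFmdiag θ, hFmdiag η] using this
  have hap : 0 ≤ C₀ * Qθ + (cform A θ θ).im := by linarith [(habs θ).1]
  have ham : 0 ≤ C₀ * Qθ - (cform A θ θ).im := by linarith [(habs θ).2]
  have hbp : 0 ≤ C₀ * Qη + (cform A η η).im := by linarith [(habs η).1]
  have hbm : 0 ≤ C₀ * Qη - (cform A η η).im := by linarith [(habs η).2]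
  have hFple := sq_le_to_sqrt hap hbp hFpcs
  have hFmle := sq_le_to_sqrt ham hbm hFmcs
  have hTdecomp : spart A θ η = (Fp θ η - Fm θ η) / 2 := by
    simp only [hFp, hFm]; ring
  have hT : ‖spart A θ η‖ ≤ C₀ * (Real.sqrt Qθ * Real.sqrt Qη) := by
    have h1 : ‖spart A θ η‖ ≤ (‖Fp θ η‖ + ‖Fm θ η‖) / 2 := by
      rw [hTdecomp]
      calc ‖(Fp θ η - Fm θ η) / 2‖ = ‖Fp θ η - Fm θ η‖ / 2 := by
            rw [norm_div]; norm_num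
        _ ≤ (‖Fp θ η‖ + ‖Fm θ η‖) / 2 := by
            have := norm_sub_le (Fp θ η) (Fm θ η); linarith
    have h2 := sqrt_sum_le hap hbp ham hbm
    have h3 : C₀ * Qθ + (cform A θ θ).im + (C₀ * Qθ - (cform A θ θ).im) = 2 * C₀ * Qθ := by ring
    have h4 : C₀ * Qη + (cform A η η).im + (C₀ * Qη - (cform A η η).im) = 2 * C₀ * Qη := by ring
    rw [h3, h4] at h2
    have h5 : Real.sqrt (2 * C₀ * Qθ) * Real.sqrt (2 * C₀ * Qη) =
        2 * C₀ * (Real.sqrt Qθ * Real.sqrt Qη) := by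
      rw [Real.sqrt_mul (by positivity : (0:ℝ) ≤ 2 * C₀),
        Real.sqrt_mul (by positivity : (0:ℝ) ≤ 2 * C₀)]
      have h6 : Real.sqrt (2 * C₀) * Real.sqrt (2 * C₀) = 2 * C₀ :=
        Real.mul_self_sqrt (by positivity)
      linear_combination (Real.sqrt Qθ * Real.sqrt Qη) * h6
    rw [h5] at h2
    linarith
  -- Conclude
  have hdecomp := cform_decomp A θ η
  calc ‖cform A θ η‖ = ‖hpart A θ η + Complex.I * spart A θ η‖ := by rw [hdecomp]
    _ ≤ ‖hpart A θ η‖ + ‖Complex.I * spart A θ η‖ := norm_add_le _ _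
    _ = ‖hpart A θ η‖ + ‖spart A θ η‖ := by
        rw [norm_mul, Complex.norm_I, one_mul]
    _ ≤ C₁ * (Real.sqrt Qθ * Real.sqrt Qη) + C₀ * (Real.sqrt Qθ * Real.sqrt Qη) := by
        linarith
    _ = (C₀ + C₁) * Real.sqrt Qθ * Real.sqrt Qη := by ring
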